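/- arXiv:1810.09791 — 5 statements merged into one kernel-verified Lean document; each statement's English description precedes it below -/
import Mathlib

section
/- Let g be the probability mass function of a sum of n-1 independent Bernoulli random variables with parameters in (0,1). Define alpha_k = g(k-1)/(g(k-1)+g(k)) for k = 0,...,n (with g(-1)=g(n)=0). Then 0 = alpha_0 < alpha_1 < ... < alpha_n = 1. -/
open Polynomial Finset

/-- Mass function of a Poisson--binomial random variable with parameters `p`,
extended to `ℤ` (zero outside `{0,...,n}`). -/
noncomputable def pb {n : ℕ} (p : Fin n → ℝ) (k : ℤ) : ℝ :=
  if k < 0 then 0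
  else ∑ S ∈ Finset.powersetCard k.toNat (Finset.univ : Finset (Fin n)),
    (∏ i ∈ S, p i) * ∏ i ∈ Sᶜ, (1 - p i)

lemma pb_neg {n : ℕ} (p : Fin n → ℝ) {k : ℤ} (h : k < 0) : pb p k = 0 := if_pos h

lemma pb_large {n : ℕ} (p : Fin n → ℝ) {k : ℤ} (h : (n : ℤ) < k) : pb p k = 0 := by
  have h0 : ¬ k < 0 := by omega
  have : (n : ℕ) < k.toNat := by omega
  rw [pb, if_neg h0, Finset.powersetCard_eq_empty.2 (by simpa using this), Finset.sum_empty]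

lemma pb_nonneg {n : ℕ} (p : Fin n → ℝ) (hp : ∀ i, p i ∈ Set.Ioo (0:ℝ) 1) (k : ℤ) :
    0 ≤ pb p k := by
  rw [pb]
  split
  · exact le_refl 0
  · exact Finset.sum_nonneg fun S _ => mul_nonneg
      (Finset.prod_nonneg fun i _ => (hp i).1.le)
      (Finset.prod_nonneg fun i _ => by linarith [(hp i).2])

lemma pb_pos {n : ℕ} (p : Fin n → ℝ) (hp : ∀ i, p i ∈ Set.Ioo (0:ℝ) 1) {k : ℤ}
    (h0 : 0 ≤ k) (hn : k ≤ (n : ℤ)) : 0 < pb p k := by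
  rw [pb, if_neg (by omega)]
  apply Finset.sum_pos
  · intro S _
    exact mul_pos (Finset.prod_pos fun i _ => (hp i).1)
      (Finset.prod_pos fun i _ => by linarith [(hp i).2])
  · refine Finset.powersetCard_nonempty.2 ?_
    simp only [Finset.card_univ, Fintype.card_fin]
    omega

noncomputable def pbQ {n : ℕ} (p : Fin n → ℝ) : Polynomial ℝ :=
  ∏ i, (Polynomial.C (p i) * Polynomial.X + Polynomial.C (1 - p i))

lemma pb_eq_coeff {n : ℕ} (p : Fin n → ℝ) (k : ℕ) : pb p (k : ℤ) = (pbQ p).coeff k := by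
  rw [pb, if_neg (by omega), pbQ, Finset.prod_add]
  have : ∀ S : Finset (Fin n), (∏ i ∈ S, Polynomial.C (p i) * Polynomial.X) *
      ∏ i ∈ Finset.univ \ S, Polynomial.C (1 - p i)
      = Polynomial.C ((∏ i ∈ S, p i) * ∏ i ∈ Sᶜ, (1 - p i)) * Polynomial.X ^ S.card := by
    intro S
    rw [Finset.prod_mul_distrib, Finset.prod_const, ← Finset.compl_eq_univ_sdiff,
      map_mul, map_prod, map_prod]
    ring
  rw [Finset.sum_congr rfl fun S _ => this S, Polynomial.finset_sum_coeff]
  simp only [Polynomial.coeff_C_mul, Polynomial.coeff_X_pow, Int.toNat_natCast,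
    mul_ite, mul_one, mul_zero]
  rw [Finset.powersetCard_eq_filter, Finset.sum_filter]
  exact Finset.sum_congr rfl fun S _ => by by_cases h : k = #S <;> simp [h, Ne.symm, eq_comm]

lemma pbQ_succ {n : ℕ} (p : Fin (n+1) → ℝ) :
    pbQ p = pbQ (Fin.init p) *
      (Polynomial.C (p (Fin.last n)) * Polynomial.X + Polynomial.C (1 - p (Fin.last n))) := by
  rw [pbQ, Fin.prod_univ_castSucc, pbQ]
  simp [Fin.init]

lemma coeff_mul_lin (f : Polynomial ℝ) (a b : ℝ) (k : ℕ) :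
    (f * (Polynomial.C a * Polynomial.X + Polynomial.C b)).coeff k
      = b * f.coeff k + a * (if k = 0 then 0 else f.coeff (k - 1)) := by
  rw [mul_add, Polynomial.coeff_add, Polynomial.coeff_mul_C, ← mul_assoc,
    mul_comm f (Polynomial.C a), mul_assoc, Polynomial.coeff_C_mul]
  cases k with
  | zero => simp [mul_comm]
  | succ j => simp [Polynomial.coeff_mul_X]; ring

lemma pb_rec {n : ℕ} (p : Fin (n+1) → ℝ) (k : ℤ) :
    pb p k = (1 - p (Fin.last n)) * pb (Fin.init p) k
      + p (Fin.last n) * pb (Fin.init p) (k - 1) := by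
  rcases lt_or_ge k 0 with h | h
  · rw [pb_neg _ h, pb_neg _ h, pb_neg _ (by omega)]; ring
  · obtain ⟨t, rfl⟩ : ∃ t : ℕ, k = (t : ℤ) := ⟨k.toNat, (Int.toNat_of_nonneg h).symm⟩
    rw [pb_eq_coeff, pbQ_succ, coeff_mul_lin]
    cases t with
    | zero =>
        rw [pb_eq_coeff (Fin.init p) 0,
          pb_neg (Fin.init p) (show ((0:ℕ):ℤ) - 1 < 0 by norm_num)]
        simp
    | succ j =>
        have h1 : pb (Fin.init p) ((j+1:ℕ):ℤ) = (pbQ (Fin.init p)).coeff (j+1) :=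
          pb_eq_coeff _ (j+1)
        have h2 : pb (Fin.init p) (((j+1:ℕ):ℤ) - 1) = (pbQ (Fin.init p)).coeff j := by
          have e : ((j+1:ℕ):ℤ) - 1 = ((j:ℕ):ℤ) := by push_cast; ring
          rw [e, pb_eq_coeff]
        rw [h1, h2]
        simp

lemma pb_lc : ∀ (n : ℕ) (p : Fin n → ℝ), (∀ i, p i ∈ Set.Ioo (0:ℝ) 1) →
    (∀ k : ℤ, pb p (k-1) * pb p (k+1) ≤ pb p k ^ 2) ∧
    (∀ k : ℤ, 1 ≤ k → k ≤ (n:ℤ) - 1 → pb p (k-1) * pb p (k+1) < pb p k ^ 2) := by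
  intro n
  induction n with
  | zero =>
      intro p hp
      constructor
      · intro k
        rcases lt_or_ge (k-1) 0 with h | h
        · rw [pb_neg _ h, zero_mul]; positivity
        · rw [pb_large _ (show ((0:ℕ):ℤ) < k+1 by omega), mul_zero]; positivity
      · intro k h1 h2; omega
  | succ n IH =>
      intro p hp
      set a := p (Fin.last n) with hadef
      set q := Fin.init p with hqdef
      have hq : ∀ i, q i ∈ Set.Ioo (0:ℝ) 1 := fun i => hp _
      have ha : a ∈ Set.Ioo (0:ℝ) 1 := hp _
      obtain ⟨ihw, ihs⟩ := IH q hq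
      -- shifted weak inequality
      have e1 : ∀ k : ℤ, pb q (k-2) * pb q k ≤ pb q (k-1) ^ 2 := by
        intro k
        have := ihw (k-1)
        rwa [show k-1-1 = k-2 by ring, show k-1+1 = k by ring] at this
      have e1s : ∀ k : ℤ, 2 ≤ k → k ≤ (n:ℤ) → pb q (k-2) * pb q k < pb q (k-1) ^ 2 := by
        intro k h1 h2
        have := ihs (k-1) (by omega) (by omega)
        rwa [show k-1-1 = k-2 by ring, show k-1+1 = k by ring] at this
      have hC_ge : ∀ k : ℤ, pb q (k-2) * pb q (k+1) ≤ pb q (k-1) * pb q k := by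
        intro k
        rcases le_or_gt k 0 with h | h
        · rw [pb_neg _ (by omega : k-2 < 0), zero_mul]
          exact mul_nonneg (pb_nonneg _ hq _) (pb_nonneg _ hq _)
        rcases le_or_gt ((n:ℤ)+1) k with h' | h'
        · rw [pb_large _ (by omega : (n:ℤ) < k+1), mul_zero]
          exact mul_nonneg (pb_nonneg _ hq _) (pb_nonneg _ hq _)
        · have p1 : 0 < pb q (k-1) := pb_pos _ hq (by omega) (by omega)
          have p2 : 0 < pb q k := pb_pos _ hq (by omega) (by omega)
          have n1 : 0 ≤ pb q (k-2) := pb_nonneg _ hq _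
          have n2 : 0 ≤ pb q (k+1) := pb_nonneg _ hq _
          nlinarith [e1 k, ihw k, mul_le_mul (e1 k) (ihw k) (mul_nonneg p1.le n2) (sq_nonneg _)]
      have hC_gt : ∀ k : ℤ, 1 ≤ k → k ≤ (n:ℤ) → pb q (k-2) * pb q (k+1) < pb q (k-1) * pb q k := by
        intro k h1 h2
        have pos : 0 < pb q (k-1) * pb q k :=
          mul_pos (pb_pos _ hq (by omega) (by omega)) (pb_pos _ hq (by omega) (by omega))
        rcases eq_or_lt_of_le h1 with rfl | h1'
        · rw [pb_neg _ (by norm_num : (1:ℤ)-2 < 0), zero_mul]; exact pos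
        rcases eq_or_lt_of_le h2 with heq | h2'
        · rw [heq, pb_large _ (by omega : (n:ℤ) < (n:ℤ)+1), mul_zero]
          rw [heq] at pos; exact pos
        · have p1 : 0 < pb q (k-1) := pb_pos _ hq (by omega) (by omega)
          have p2 : 0 < pb q k := pb_pos _ hq (by omega) (by omega)
          have n1 : 0 ≤ pb q (k-2) := pb_nonneg _ hq _
          have n2 : 0 ≤ pb q (k+1) := pb_nonneg _ hq _
          nlinarith [e1s k (by omega) (by omega), ihs k (by omega) (by omega)]
      have E : ∀ k : ℤ, pb p k ^ 2 - pb p (k-1) * pb p (k+1)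
          = (1-a)^2 * (pb q k ^ 2 - pb q (k-1) * pb q (k+1))
            + a^2 * (pb q (k-1) ^ 2 - pb q (k-2) * pb q k)
            + a * (1-a) * (pb q (k-1) * pb q k - pb q (k-2) * pb q (k+1)) := by
        intro k
        rw [pb_rec p (k-1), pb_rec p (k+1), pb_rec p k,
          show k-1-1 = k-2 by ring, show k+1-1 = k by ring, ← hadef, ← hqdef]
        ring
      constructor
      · intro k
        have t1 : 0 ≤ (1-a)^2 * (pb q k ^ 2 - pb q (k-1) * pb q (k+1)) :=
          mul_nonneg (sq_nonneg _) (by linarith [ihw k])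
        have t2 : 0 ≤ a^2 * (pb q (k-1) ^ 2 - pb q (k-2) * pb q k) :=
          mul_nonneg (sq_nonneg _) (by linarith [e1 k])
        have t3 : 0 ≤ a * (1-a) * (pb q (k-1) * pb q k - pb q (k-2) * pb q (k+1)) :=
          mul_nonneg (mul_nonneg ha.1.le (by linarith [ha.2])) (by linarith [hC_ge k])
        linarith [E k]
      · intro k h1 h2
        have h2' : k ≤ (n:ℤ) := by push_cast at h2; omega
        have t1 : 0 ≤ (1-a)^2 * (pb q k ^ 2 - pb q (k-1) * pb q (k+1)) :=
          mul_nonneg (sq_nonneg _) (by linarith [ihw k])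
        have t2 : 0 ≤ a^2 * (pb q (k-1) ^ 2 - pb q (k-2) * pb q k) :=
          mul_nonneg (sq_nonneg _) (by linarith [e1 k])
        have t3 : 0 < a * (1-a) * (pb q (k-1) * pb q k - pb q (k-2) * pb q (k+1)) :=
          mul_pos (mul_pos ha.1 (by linarith [ha.2])) (by linarith [hC_gt k h1 h2'])
        linarith [E k]

theorem stmt1 (m : ℕ) (p : Fin m → ℝ)
    (hp : ∀ i, p i ∈ Set.Ioo (0 : ℝ) 1)
    (g : ℤ → ℝ) (hg : g = pb p)
    (α : ℤ → ℝ) (hα : ∀ k : ℤ, α k = g (k - 1) / (g (k - 1) + g k)) :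
    α 0 = 0 ∧ α (m + 1) = 1 ∧
      ∀ k : ℤ, 0 ≤ k → k < (m : ℤ) + 1 → α k < α (k + 1) := by
  subst hg
  refine ⟨?_, ?_, ?_⟩
  · rw [hα 0, pb_neg p (by norm_num : (0:ℤ)-1 < 0), zero_div]
  · rw [hα ((m:ℤ)+1), show (m:ℤ)+1-1 = (m:ℤ) by ring, pb_large p (show (m:ℤ) < (m:ℤ)+1 by omega), add_zero,
      div_self (pb_pos p hp (by omega) le_rfl).ne']
  · intro k hk0 hk1
    obtain ⟨w, s⟩ := pb_lc m p hp
    rw [hα k, hα (k+1), show k+1-1 = k by ring]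
    have hB : 0 < pb p k := pb_pos p hp hk0 (by omega)
    have hA : 0 ≤ pb p (k-1) := pb_nonneg p hp _
    have hC : 0 ≤ pb p (k+1) := pb_nonneg p hp _
    have hkey : pb p (k-1) * pb p (k+1) < pb p k ^ 2 := by
      rcases eq_or_lt_of_le hk0 with heq | h1
      · rw [pb_neg p (by omega : k-1 < 0), zero_mul]; exact pow_pos hB 2
      · rcases (by omega : k = (m:ℤ) ∨ k ≤ (m:ℤ)-1) with heq | hle
        · rw [pb_large p (by omega : (m:ℤ) < k+1), mul_zero]; exact pow_pos hB 2
        · exact s k (by omega) hle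
    rw [div_lt_div_iff₀ (by linarith) (by linarith)]
    nlinarith [hkey]
end

section
/- Define psi(a) = a*log(a) - (1-a)*log(1-a) - (2 - 2*log 2)*(a - 1/2) for a in [0,1] (with 0*log 0 = 0). Then psi admits the power series representation psi(a) = - sum_{r >= 1} (2a-1)^{2r+1} / (2r(2r+1)), converging absolutely for all a in [0,1]. -/
open Real Filter Finset

lemma HasSum.congr_fun' {f g : ℕ → ℝ} {a : ℝ} (h : HasSum f a) (he : ∀ n, g n = f n) :
    HasSum g a := by
  have : g = f := funext he
  rwa [this]

/-- Summability of the coefficient series. -/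
lemma aux_summable_coeff : Summable (fun n : ℕ => (1 : ℝ) / ((2 * n + 2) * (2 * n + 3))) := by
  have h2 : Summable (fun n : ℕ => (1 : ℝ) / ((n : ℝ) + 1) ^ 2) := by
    have := Real.summable_one_div_nat_pow.mpr (show 1 < 2 by norm_num)
    exact_mod_cast (summable_nat_add_iff 1).mpr this
  refine Summable.of_nonneg_of_le (fun n => by positivity) (fun n => ?_) h2
  have h1 : ((n : ℝ) + 1) ^ 2 ≤ (2 * n + 2) * (2 * n + 3) := by nlinarith [(n.cast_nonneg : (0:ℝ) ≤ n)]
  have h0 : (0 : ℝ) < ((n : ℝ) + 1) ^ 2 := by positivity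
  exact one_div_le_one_div_of_le h0 h1

lemma aux_partial (N : ℕ) :
    ∑ n ∈ range N, (1 : ℝ) / ((2 * n + 2) * (2 * n + 3))
      = 1 + (harmonic N : ℝ) - (harmonic (2 * N + 1) : ℝ) := by
  induction N with
  | zero => simp [harmonic_succ]
  | succ N ih =>
    rw [Finset.sum_range_succ, ih]
    have e1 : 2 * (N + 1) + 1 = (2 * N + 1) + 1 + 1 := by ring
    rw [harmonic_succ N, e1, harmonic_succ (2 * N + 1 + 1), harmonic_succ (2 * N + 1)]
    push_cast
    have h1 : ((2 : ℝ) * N + 2) ≠ 0 := by positivity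
    have h2 : ((2 : ℝ) * N + 3) ≠ 0 := by positivity
    have h3 : ((N : ℝ) + 1) ≠ 0 := by positivity
    field_simp
    ring

/-- The endpoint series: `∑ 1/((2n+2)(2n+3)) = 1 - log 2`. -/
lemma aux_endpoint :
    HasSum (fun n : ℕ => (1 : ℝ) / ((2 * n + 2) * (2 * n + 3))) (1 - Real.log 2) := by
  rw [Summable.hasSum_iff_tendsto_nat aux_summable_coeff]
  simp only [aux_partial]
  have h2N : Tendsto (fun N : ℕ => 2 * N + 1) atTop atTop :=
    tendsto_atTop_atTop.mpr fun b => ⟨b, fun n hn => by omega⟩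
  have hA : Tendsto (fun N : ℕ => (harmonic (2 * N + 1) : ℝ) - Real.log (2 * N + 1)) atTop
      (nhds eulerMascheroniConstant) := by
    have := Real.tendsto_harmonic_sub_log.comp h2N
    convert this using 2 with N
    push_cast
    norm_num
  have hB : Tendsto (fun N : ℕ => (harmonic N : ℝ) - Real.log N) atTop
      (nhds eulerMascheroniConstant) := Real.tendsto_harmonic_sub_log
  have hC : Tendsto (fun N : ℕ => Real.log (2 * N + 1) - Real.log N) atTop
      (nhds (Real.log 2)) := by
    have hlim : Tendsto (fun N : ℕ => Real.log (2 + 1 / (N : ℝ))) atTop (nhds (Real.log 2)) := by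
      have : Tendsto (fun N : ℕ => 2 + 1 / (N : ℝ)) atTop (nhds 2) := by
        simpa using (tendsto_const_nhds (x := (2:ℝ))).add
          (tendsto_one_div_atTop_nhds_zero_nat)
      exact (Real.continuousAt_log (by norm_num)).tendsto.comp this
    apply hlim.congr'
    filter_upwards [eventually_ne_atTop 0] with N hN
    have hN' : (0 : ℝ) < N := by positivity
    rw [← Real.log_div (by positivity) hN'.ne']
    congr 1
    field_simp
  have key : Tendsto (fun N : ℕ => (harmonic (2 * N + 1) : ℝ) - (harmonic N : ℝ)) atTop
      (nhds (Real.log 2)) := by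
    have h := (hA.sub hB).add hC
    have e : eulerMascheroniConstant - eulerMascheroniConstant + Real.log 2 = Real.log 2 := by
      ring
    rw [e] at h
    exact h.congr fun N => by ring
  have h := (tendsto_const_nhds (x := (1:ℝ))).sub key
  rw [show (1:ℝ) - Real.log 2 = 1 - Real.log 2 from rfl] at h
  exact h.congr fun N => by ring

/-- The interior case power series identity. -/
lemma aux_interior {x : ℝ} (h : |x| < 1) :
    HasSum (fun n : ℕ => -(x ^ (2 * (n + 1) + 1) / ((2 * (n + 1) : ℝ) * (2 * (n + 1) + 1))))
      ((1 + x) / 2 * Real.log (1 + x) - (1 - x) / 2 * Real.log (1 - x) - x) := by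
  have h' : |(-x)| < 1 := by rwa [abs_neg]
  have h1 := Real.hasSum_pow_div_log_of_abs_lt_one h
  have h2 := Real.hasSum_pow_div_log_of_abs_lt_one h'
  have hE0 := h1.add h2
  -- extract even terms
  have hg : Function.Injective (fun n : ℕ => 2 * n + 1) := fun a b hab => by simp only [] at hab; omega
  have hE : HasSum (fun n : ℕ => x ^ (2 * n + 2) / ((n : ℝ) + 1))
      (-Real.log (1 - x) + -Real.log (1 - -x)) := by
    have hvanish : ∀ k : ℕ, k ∉ Set.range (fun n : ℕ => 2 * n + 1) →
        x ^ (k + 1) / ((k : ℝ) + 1) + (-x) ^ (k + 1) / ((k : ℝ) + 1) = 0 := by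
      intro k hk
      have hkeven : Even k := by
        rcases Nat.even_or_odd k with he | ho
        · exact he
        · obtain ⟨m, hm⟩ := ho
          exact absurd ⟨m, show 2 * m + 1 = k by omega⟩ hk
      have : Odd (k + 1) := hkeven.add_one
      rw [this.neg_pow]
      ring
    have := (Function.Injective.hasSum_iff hg hvanish).mpr hE0
    refine this.congr_fun' fun n => ?_
    simp only [Function.comp]
    have : Odd (2 * n + 1 + 1 + 1) := ⟨n + 1, by ring⟩
    have hodd : Even (2 * n + 1 + 1) := ⟨n + 1, by ring⟩
    rw [hodd.neg_pow]
    have hne : ((2 * n + 1 : ℕ) : ℝ) + 1 ≠ 0 := by positivity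
    push_cast
    field_simp
    ring
  have hO := Real.hasSum_log_sub_log_of_abs_lt_one h
  -- shift hO by one
  have hO' : HasSum (fun n : ℕ => (2 : ℝ) * (1 / (2 * ((n : ℝ) + 1) + 1)) * x ^ (2 * (n + 1) + 1))
      (Real.log (1 + x) - Real.log (1 - x) - 2 * x) := by
    have h0 : ∑ i ∈ range 1, (2 : ℝ) * (1 / (2 * (i : ℝ) + 1)) * x ^ (2 * i + 1) = 2 * x := by
      simp
    have hshift := (hasSum_nat_add_iff'
        (f := fun k : ℕ => (2 : ℝ) * (1 / (2 * (k : ℝ) + 1)) * x ^ (2 * k + 1))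
        (g := Real.log (1 + x) - Real.log (1 - x)) 1).mpr hO
    rw [h0] at hshift
    refine hshift.congr_fun' fun n => ?_
    push_cast
    norm_num
  have htarget := (hO'.mul_left (1 / 2)).sub (hE.mul_left (x / 2))
  have hval : (1 / 2) * (Real.log (1 + x) - Real.log (1 - x) - 2 * x)
      - (x / 2) * (-Real.log (1 - x) + -Real.log (1 - -x))
      = (1 + x) / 2 * Real.log (1 + x) - (1 - x) / 2 * Real.log (1 - x) - x := by
    rw [show (1 : ℝ) - -x = 1 + x by ring]
    ring
  rw [hval] at htarget
  refine htarget.congr_fun' fun n => ?_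
  have hne1 : (2 * ((n : ℝ) + 1) + 1) ≠ 0 := by positivity
  have hne2 : ((n : ℝ) + 1) ≠ 0 := by positivity
  have hpow : x ^ (2 * (n + 1) + 1) = x ^ (2 * n + 2) * x := by ring
  rw [hpow]
  push_cast
  field_simp
  ring

/-- The function `ψ` of Definition 2.2 (note `Real.log 0 = 0`, so the
convention `0 log 0 = 0` is automatic). -/
noncomputable def psi (a : ℝ) : ℝ :=
  a * Real.log a - (1 - a) * Real.log (1 - a) - (2 - 2 * Real.log 2) * (a - 1 / 2)

theorem stmt3 (a : ℝ) (ha : a ∈ Set.Icc (0 : ℝ) 1) :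
    HasSum
      (fun r : ℕ =>
        -((2 * a - 1) ^ (2 * (r + 1) + 1) / ((2 * (r + 1) : ℝ) * (2 * (r + 1) + 1))))
      (psi a) ∧
    Summable
      (fun r : ℕ =>
        |(2 * a - 1) ^ (2 * (r + 1) + 1) / ((2 * (r + 1) : ℝ) * (2 * (r + 1) + 1))|) := by
  obtain ⟨ha0, ha1⟩ := ha
  set x := 2 * a - 1 with hx
  have hx1 : |x| ≤ 1 := by rw [abs_le]; constructor <;> [linarith; linarith]
  constructor
  · -- the HasSum part
    rcases eq_or_lt_of_le ha0 with h0 | h0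
    · -- a = 0, x = -1
      have hxm : x = -1 := by rw [hx, ← h0]; ring
      have hpsi : psi a = 1 - Real.log 2 := by
        rw [← h0]; simp [psi]; ring
      rw [hpsi]
      refine aux_endpoint.congr_fun' fun n => ?_
      rw [hxm]
      have : Odd (2 * (n + 1) + 1) := ⟨n + 1, by ring⟩
      rw [this.neg_one_pow]
      push_cast
      ring
    rcases eq_or_lt_of_le ha1 with h1 | h1
    · -- a = 1, x = 1
      have hxm : x = 1 := by rw [hx, h1]; ring
      have hpsi : psi a = Real.log 2 - 1 := by
        rw [h1]; simp [psi]; ring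
      rw [hpsi]
      have := aux_endpoint.neg
      rw [show -(1 - Real.log 2) = Real.log 2 - 1 by ring] at this
      refine this.congr_fun' fun n => ?_
      rw [hxm, one_pow]
      push_cast
      ring
    · -- interior case
      have habs : |x| < 1 := by
        rw [abs_lt]; constructor <;> [linarith; linarith]
      have h := aux_interior habs
      have e1 : (1 + x) / 2 = a := by rw [hx]; ring
      have e2 : (1 - x) / 2 = 1 - a := by rw [hx]; ring
      have e3 : (1 : ℝ) + x = 2 * a := by rw [hx]; ring
      have e4 : (1 : ℝ) - x = 2 * (1 - a) := by rw [hx]; ring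
      have hlog1 : Real.log (1 + x) = Real.log 2 + Real.log a := by
        rw [e3, Real.log_mul (by norm_num) (ne_of_gt h0)]
      have hlog2 : Real.log (1 - x) = Real.log 2 + Real.log (1 - a) := by
        rw [e4, Real.log_mul (by norm_num) (by linarith)]
      rw [e1, e2, hlog1, hlog2] at h
      have hval : a * (Real.log 2 + Real.log a) - (1 - a) * (Real.log 2 + Real.log (1 - a)) - x
          = psi a := by
        rw [psi, hx]; ring
      rw [hval] at h
      exact h
  · -- Summability of absolute values
    refine Summable.of_nonneg_of_le (fun n => abs_nonneg _)
      (fun n => ?_) aux_summable_coeff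
    have hd : (0:ℝ) < (2 * ((n:ℝ) + 1)) * (2 * ((n:ℝ) + 1) + 1) := by positivity
    rw [abs_div, abs_of_pos hd, abs_pow]
    have hnum : |x| ^ (2 * (n + 1) + 1) ≤ 1 := pow_le_one₀ (abs_nonneg _) hx1
    have hle : (2 * (n:ℝ) + 2) * (2 * (n:ℝ) + 3) ≤ (2 * ((n:ℝ) + 1)) * (2 * ((n:ℝ) + 1) + 1) := by
      push_cast; nlinarith [(n.cast_nonneg : (0:ℝ) ≤ n)]
    calc |x| ^ (2 * (n + 1) + 1) / ((2 * ((n:ℝ) + 1)) * (2 * ((n:ℝ) + 1) + 1))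
        ≤ 1 / ((2 * ((n:ℝ) + 1)) * (2 * ((n:ℝ) + 1) + 1)) := by gcongr
      _ ≤ 1 / ((2 * (n:ℝ) + 2) * (2 * (n:ℝ) + 3)) := by
          apply one_div_le_one_div_of_le (by positivity) hle
end

section
/- Let g be the mass function of a sum of independent Bernoulli variables, write g^{(i)} for the mass function with the i-th variable omitted, and D^{(i)}(k) = (g^{(i)}(k))^2 - g^{(i)}(k+1) g^{(i)}(k-1). Then (D^{(i)}(k))^2 - D^{(i)}(k-1) D^{(i)}(k+1) >= 0, i.e. the sequence D^{(i)} is log-concave. -/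
open Polynomial Finset

/-- Coefficients of a polynomial, indexed by `ℤ`. -/
noncomputable def coeZ (P : Polynomial ℝ) (k : ℤ) : ℝ :=
  if k < 0 then 0 else P.coeff k.toNat

/-- 3×3 determinant with rows (a b c; d e f; g h i). -/
def det3 (a b c d e f g h i : ℝ) : ℝ :=
  a * (e * i - f * h) - b * (d * i - f * g) + c * (d * h - e * g)

/-- Determinant of the 3×3 minor of the Toeplitz matrix of `g` with
column offsets `x, y, z`. -/
def D3 (g : ℤ → ℝ) (x y z : ℤ) : ℝ :=
  det3 (g x) (g y) (g z) (g (x+1)) (g (y+1)) (g (z+1)) (g (x+2)) (g (y+2)) (g (z+2))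

/-- Kronecker delta at 0. -/
noncomputable def dlt (k : ℤ) : ℝ := if k = 0 then 1 else 0

lemma dlt_nonneg (k : ℤ) : 0 ≤ dlt k := by unfold dlt; split_ifs <;> norm_num

lemma dlt_mul_zero (s t u : ℤ) (h : ¬(s = 0 ∧ t = 0 ∧ u = 0)) :
    dlt s * (dlt t * dlt u) = 0 := by
  unfold dlt; split_ifs <;> simp_all

lemma coeZ_one : coeZ 1 = dlt := by
  funext k
  unfold coeZ dlt
  split_ifs with h1 h2 h2
  · omega
  · rfl
  · subst h2; simp
  · rw [Polynomial.coeff_one, if_neg (by omega)]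

lemma tn_base (x y z : ℤ) (hxy : y < x) (hyz : z < y) : 0 ≤ D3 dlt x y z := by
  have key : D3 dlt x y z =
      dlt x * (dlt (y+1) * dlt (z+2))
      - dlt x * (dlt (z+1) * dlt (y+2))
      - dlt y * (dlt (x+1) * dlt (z+2))
      + dlt y * (dlt (z+1) * dlt (x+2))
      + dlt z * (dlt (x+1) * dlt (y+2))
      - dlt z * (dlt (y+1) * dlt (x+2)) := by
    unfold D3 det3; ring
  rw [key, dlt_mul_zero x (z+1) (y+2) (by omega), dlt_mul_zero y (x+1) (z+2) (by omega),
    dlt_mul_zero y (z+1) (x+2) (by omega), dlt_mul_zero z (x+1) (y+2) (by omega),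
    dlt_mul_zero z (y+1) (x+2) (by omega)]
  have := mul_nonneg (dlt_nonneg x) (mul_nonneg (dlt_nonneg (y+1)) (dlt_nonneg (z+2)))
  linarith

lemma coeZ_rec (a b : ℝ) (P : Polynomial ℝ) (t : ℤ) :
    coeZ ((C a + C b * X) * P) t = a * coeZ P t + b * coeZ P (t - 1) := by
  unfold coeZ
  rcases lt_trichotomy t 0 with h | h | h
  · rw [if_pos h, if_pos h, if_pos (by omega)]; ring
  · subst h
    rw [if_neg (by omega), if_neg (by omega), if_pos (by omega)]
    simp [Polynomial.mul_coeff_zero]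
  · rw [if_neg (by omega), if_neg (by omega), if_neg (by omega)]
    have ht : t.toNat = (t - 1).toNat + 1 := by omega
    rw [ht, add_mul, Polynomial.coeff_add, Polynomial.coeff_C_mul, mul_assoc,
      Polynomial.coeff_C_mul, Polynomial.coeff_X_mul]

lemma D3_expand (g g' : ℤ → ℝ) (a b : ℝ) (h : ∀ t, g' t = a * g t + b * g (t-1))
    (x y z : ℤ) :
    D3 g' x y z =
      a^3 * D3 g x y z
      + a^2*b*(D3 g (x-1) y z + D3 g x (y-1) z + D3 g x y (z-1))
      + a*b^2*(D3 g (x-1) (y-1) z + D3 g (x-1) y (z-1) + D3 g x (y-1) (z-1))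
      + b^3 * D3 g (x-1) (y-1) (z-1) := by
  simp only [D3, det3, h]
  simp only [show x+1-1 = x from by ring, show x+2-1 = x+1 from by ring,
    show x-1+1 = x from by ring, show x-1+2 = x+1 from by ring,
    show y+1-1 = y from by ring, show y+2-1 = y+1 from by ring,
    show y-1+1 = y from by ring, show y-1+2 = y+1 from by ring,
    show z+1-1 = z from by ring, show z+2-1 = z+1 from by ring,
    show z-1+1 = z from by ring, show z-1+2 = z+1 from by ring]
  ring

lemma D3_col12 (g : ℤ → ℝ) (x z : ℤ) : D3 g x x z = 0 := by
  unfold D3 det3; ring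

lemma D3_col23 (g : ℤ → ℝ) (x z : ℤ) : D3 g x z z = 0 := by
  unfold D3 det3; ring

lemma vieta {ι : Type*} [DecidableEq ι] (p : ι → ℝ) (s : Finset ι) (t : ℕ) :
    (∏ i ∈ s, (C (1 - p i) + C (p i) * X)).coeff t
      = ∑ S ∈ s.powersetCard t, (∏ i ∈ S, p i) * ∏ i ∈ s \ S, (1 - p i) := by
  induction s using Finset.induction_on generalizing t with
  | empty =>
      cases t with
      | zero => simp
      | succ t =>
          rw [Finset.prod_empty, Polynomial.coeff_one, if_neg (by omega),
            Finset.powersetCard_eq_empty.2 (by simp), Finset.sum_empty]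
  | @insert i s hi ih =>
      rw [Finset.prod_insert hi]
      cases t with
      | zero =>
          rw [Polynomial.mul_coeff_zero]
          simp only [Finset.powersetCard_zero, Finset.sum_singleton, Finset.prod_empty,
            Finset.sdiff_empty, one_mul]
          rw [Finset.prod_insert hi]
          have : (C (1 - p i) + C (p i) * X).coeff 0 = 1 - p i := by simp
          rw [this, ih 0]
          simp [Finset.powersetCard_zero]
      | succ t =>
          have hco : ((C (1 - p i) + C (p i) * X) * ∏ j ∈ s, (C (1 - p j) + C (p j) * X)).coeff
              (t+1) = (1 - p i) * (∏ j ∈ s, (C (1 - p j) + C (p j) * X)).coeff (t+1)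
              + p i * (∏ j ∈ s, (C (1 - p j) + C (p j) * X)).coeff t := by
            rw [add_mul, Polynomial.coeff_add, Polynomial.coeff_C_mul, mul_assoc,
              Polynomial.coeff_C_mul, Polynomial.coeff_X_mul]
          rw [hco, ih, ih, Finset.powersetCard_succ_insert hi]
          rw [Finset.sum_union]
          · congr 1
            · rw [Finset.mul_sum]
              refine Finset.sum_congr rfl fun S hS => ?_
              have hSs : S ⊆ s := (Finset.mem_powersetCard.1 hS).1
              have hiS : i ∉ S := fun hmem => hi (hSs hmem)
              have hins : insert i s \ S = insert i (s \ S) := by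
                ext a; simp only [Finset.mem_sdiff, Finset.mem_insert]
                constructor
                · rintro ⟨h1 | h1, h2⟩
                  · exact Or.inl h1
                  · exact Or.inr ⟨h1, h2⟩
                · rintro (h1 | ⟨h1, h2⟩)
                  · exact ⟨Or.inl h1, fun hc => hiS (h1 ▸ hc)⟩
                  · exact ⟨Or.inr h1, h2⟩
              rw [hins, Finset.prod_insert (fun hc => hi (Finset.mem_sdiff.1 hc).1)]
              ring
            · rw [Finset.sum_image, Finset.mul_sum]
              · refine Finset.sum_congr rfl fun S hS => ?_
                have hSs : S ⊆ s := (Finset.mem_powersetCard.1 hS).1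
                have hiS : i ∉ S := fun hmem => hi (hSs hmem)
                have hd : insert i s \ insert i S = s \ S := by
                  ext a; simp only [Finset.mem_sdiff, Finset.mem_insert, not_or]
                  constructor
                  · rintro ⟨h1 | h1, h2, h3⟩
                    · exact absurd h1 h2
                    · exact ⟨h1, h3⟩
                  · rintro ⟨h1, h2⟩
                    exact ⟨Or.inr h1, fun hc => hi (hc ▸ h1), h2⟩
                rw [hd, Finset.prod_insert hiS]
                ring
              · intro S hS T hT hST
                have hiS : i ∉ S := fun hmem => hi ((Finset.mem_powersetCard.1 hS).1 hmem)
                have hiT : i ∉ T := fun hmem => hi ((Finset.mem_powersetCard.1 hT).1 hmem)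
                rwa [Finset.insert_erase_invOn.2.injOn.eq_iff] at hST <;> simp [hiS, hiT]
          · rw [Finset.disjoint_left]
            intro S hS hS'
            have hiS : i ∉ S := fun hmem => hi ((Finset.mem_powersetCard.1 hS).1 hmem)
            obtain ⟨T, _, rfl⟩ := Finset.mem_image.1 hS'
            exact hiS (Finset.mem_insert_self i T)

lemma tn (m : ℕ) (p : Fin m → ℝ) (hp : ∀ i, p i ∈ Set.Icc (0:ℝ) 1) (s : Finset (Fin m)) :
    ∀ x y z : ℤ, y < x → z < y →
      0 ≤ D3 (coeZ (∏ i ∈ s, (C (1 - p i) + C (p i) * X))) x y z := by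
  induction s using Finset.induction_on with
  | empty =>
      intro x y z hxy hyz
      rw [Finset.prod_empty, coeZ_one]
      exact tn_base x y z hxy hyz
  | @insert i s hi ih =>
      intro x y z hxy hyz
      have ha : (0:ℝ) ≤ 1 - p i := by have := (hp i).2; linarith
      have hb : (0:ℝ) ≤ p i := (hp i).1
      set G := coeZ (∏ j ∈ s, (C (1 - p j) + C (p j) * X)) with hG
      have hrec : ∀ t, coeZ (∏ j ∈ insert i s, (C (1 - p j) + C (p j) * X)) t
          = (1 - p i) * G t + p i * G (t - 1) := by
        intro t
        rw [Finset.prod_insert hi, coeZ_rec]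
      rw [D3_expand G _ (1 - p i) (p i) hrec x y z]
      have T1 : 0 ≤ D3 G x y z := ih x y z hxy hyz
      have T2 : 0 ≤ D3 G x y (z-1) := ih x y (z-1) hxy (by omega)
      have T3 : 0 ≤ D3 G x (y-1) z := by
        rcases eq_or_lt_of_le (show z ≤ y - 1 by omega) with h | h
        · rw [← h]; rw [D3_col23]
        · exact ih x (y-1) z (by omega) h
      have T4 : 0 ≤ D3 G (x-1) y z := by
        rcases eq_or_lt_of_le (show y ≤ x - 1 by omega) with h | h
        · rw [← h]; rw [D3_col12]
        · exact ih (x-1) y z h hyz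
      have T5 : 0 ≤ D3 G (x-1) (y-1) z := by
        rcases eq_or_lt_of_le (show z ≤ y - 1 by omega) with h | h
        · rw [← h]; rw [D3_col23]
        · exact ih (x-1) (y-1) z (by omega) h
      have T6 : 0 ≤ D3 G (x-1) y (z-1) := by
        rcases eq_or_lt_of_le (show y ≤ x - 1 by omega) with h | h
        · rw [← h]; rw [D3_col12]
        · exact ih (x-1) y (z-1) h (by omega)
      have T7 : 0 ≤ D3 G x (y-1) (z-1) := ih x (y-1) (z-1) (by omega) (by omega)
      have T8 : 0 ≤ D3 G (x-1) (y-1) (z-1) := ih (x-1) (y-1) (z-1) (by omega) (by omega)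
      have h1 : 0 ≤ (1 - p i)^3 * D3 G x y z := mul_nonneg (pow_nonneg ha 3) T1
      have h2 : 0 ≤ (1 - p i)^2 * p i * (D3 G (x-1) y z + D3 G x (y-1) z + D3 G x y (z-1)) :=
        mul_nonneg (mul_nonneg (pow_nonneg ha 2) hb) (by linarith)
      have h3 : 0 ≤ (1 - p i) * p i^2 *
          (D3 G (x-1) (y-1) z + D3 G (x-1) y (z-1) + D3 G x (y-1) (z-1)) :=
        mul_nonneg (mul_nonneg ha (pow_nonneg hb 2)) (by linarith)
      have h4 : 0 ≤ p i^3 * D3 G (x-1) (y-1) (z-1) := mul_nonneg (pow_nonneg hb 3) T8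
      linarith

theorem stmt11 (m : ℕ) (p : Fin m → ℝ)
    (hp : ∀ i, p i ∈ Set.Icc (0 : ℝ) 1)
    (g : ℤ → ℝ) (hg : g = pb p)
    (D : ℤ → ℝ) (hD : ∀ k : ℤ, D k = (g k) ^ 2 - g (k + 1) * g (k - 1)) :
    ∀ k : ℤ, 0 ≤ k → k ≤ (m : ℤ) → 0 ≤ (D k) ^ 2 - D (k - 1) * D (k + 1) := by
  intro k _ _
  have hpb : g = coeZ (∏ i : Fin m, (C (1 - p i) + C (p i) * X)) := by
    funext t
    rw [hg]
    unfold pb coeZ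
    split_ifs with h
    · rfl
    · rw [vieta]
      refine Finset.sum_congr rfl fun S _ => ?_
      rw [Finset.compl_eq_univ_sdiff]
  have hgnn : 0 ≤ g k := by
    rw [hg]
    unfold pb
    split_ifs with h
    · exact le_refl 0
    · refine Finset.sum_nonneg fun S _ => mul_nonneg ?_ ?_
      · exact Finset.prod_nonneg fun i _ => (hp i).1
      · exact Finset.prod_nonneg fun i _ => by have := (hp i).2; linarith
  have hD3 : 0 ≤ D3 g k (k-1) (k-2) := by
    rw [hpb]
    exact tn m p hp Finset.univ k (k-1) (k-2) (by omega) (by omega)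
  have key : (D k)^2 - D (k-1) * D (k+1) = g k * D3 g k (k-1) (k-2) := by
    rw [hD k, hD (k-1), hD (k+1)]
    simp only [D3, det3,
      show k-1+1 = k from by ring, show k-1-1 = k-2 from by ring,
      show k+1+1 = k+2 from by ring, show k+1-1 = k from by ring,
      show k-1+2 = k+1 from by ring, show k-2+1 = k-1 from by ring,
      show k-2+2 = k from by ring]
    ring
  rw [key]
  exact mul_nonneg hgnn hD3
end

section
/- Let f be a positive probability mass function on {0,...,n}, g defined by g(k) = 2(1 - alpha_k) f(k) = 2 alpha_{k+1} f(k+1) for mixing coefficients alpha with alpha_0 = 0, alpha_n = 1, and beta_k = alpha_k - 1/2. Then for every r >= 1: 4 sum_{k=0}^n f(k) beta_k^{2r+1} = sum_{k=0}^{n-1} g(k) (beta_{k+1}^{2r} - beta_k^{2r}). -/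
theorem stmt16 (n : ℕ) (hn : 1 ≤ n) (f α : ℕ → ℝ)
    (hfpos : ∀ k ≤ n, 0 < f k)
    (hfsum : ∑ k ∈ Finset.range (n + 1), f k = 1)
    (hα0 : α 0 = 0) (hαn : α n = 1)
    (g : ℕ → ℝ) (hg : ∀ k, g k = 2 * (1 - α k) * f k)
    (hg' : ∀ k, k + 1 ≤ n → g k = 2 * α (k + 1) * f (k + 1))
    (β : ℕ → ℝ) (hβ : ∀ k, β k = α k - 1 / 2) :
    ∀ r : ℕ, 1 ≤ r →
      4 * ∑ k ∈ Finset.range (n + 1), f k * β k ^ (2 * r + 1) =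
        ∑ k ∈ Finset.range n, g k * (β (k + 1) ^ (2 * r) - β k ^ (2 * r)) := by
  intro r hr
  have hgn : g n = 0 := by rw [hg, hαn]; ring
  have key : ∀ k ∈ Finset.range (n + 1),
      4 * (f k * β k ^ (2 * r + 1)) =
      ((if k = 0 then 0 else g (k - 1)) - g k) * β k ^ (2 * r) := by
    intro k hk
    rw [Finset.mem_range] at hk
    rcases Nat.eq_zero_or_pos k with rfl | hkpos
    · rw [if_pos rfl, hg, hα0, hβ 0, hα0, pow_succ]; ring
    · obtain ⟨m, rfl⟩ := Nat.exists_eq_succ_of_ne_zero hkpos.ne'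
      rw [if_neg (Nat.succ_ne_zero m), Nat.succ_sub_one,
        hg' m (by omega), hg, hβ, pow_succ]
      ring
  rw [Finset.mul_sum, Finset.sum_congr rfl key]
  have split : ∑ k ∈ Finset.range (n + 1),
        ((if k = 0 then 0 else g (k - 1)) - g k) * β k ^ (2 * r)
      = (∑ k ∈ Finset.range (n + 1),
          (if k = 0 then 0 else g (k - 1)) * β k ^ (2 * r))
        - ∑ k ∈ Finset.range (n + 1), g k * β k ^ (2 * r) := by
    rw [← Finset.sum_sub_distrib]
    exact Finset.sum_congr rfl (fun k _ => by ring)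
  rw [split]
  have h1 : ∑ k ∈ Finset.range (n + 1),
        (if k = 0 then 0 else g (k - 1)) * β k ^ (2 * r)
      = ∑ j ∈ Finset.range n, g j * β (j + 1) ^ (2 * r) := by
    rw [Finset.sum_range_succ']
    simp
  have h2 : ∑ k ∈ Finset.range (n + 1), g k * β k ^ (2 * r)
      = ∑ k ∈ Finset.range n, g k * β k ^ (2 * r) := by
    rw [Finset.sum_range_succ, hgn]; simp
  rw [h1, h2, ← Finset.sum_sub_distrib]
  exact Finset.sum_congr rfl (fun k _ => by ring)
end

section
/- Let p_n be in (0, 1/2], let g be the mass function of a sum of n-1 independent Bernoulli random variables (any parameters in [0,1]), and f(k) = (1 - p_n) g(k) + p_n g(k-1) the mass function after convolving with Bernoulli(p_n). Then -2 sum_{k=0}^n (g(k-1) - g(k)) f(k) = (1 - 2 p_n) sum_{k=0}^n (g(k-1) - g(k))^2 >= 0. In particular the derivative of the Tsallis 2-entropy of the Poisson-binomial distribution with respect to p_n is nonnegative when p_n <= 1/2. -/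
theorem stmt18 (m : ℕ) (q : Fin m → ℝ)
    (hq : ∀ i, q i ∈ Set.Icc (0 : ℝ) 1)
    (pn : ℝ) (hpn : pn ∈ Set.Ioc (0 : ℝ) (1 / 2))
    (g : ℤ → ℝ) (hg : g = pb q)
    (f : ℤ → ℝ) (hf : ∀ k : ℤ, f k = (1 - pn) * g k + pn * g (k - 1)) :
    -2 * ∑ k ∈ Finset.Icc (0 : ℤ) (m + 1), (g (k - 1) - g k) * f k =
        (1 - 2 * pn) * ∑ k ∈ Finset.Icc (0 : ℤ) (m + 1), (g (k - 1) - g k) ^ 2 ∧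
      0 ≤ (1 - 2 * pn) * ∑ k ∈ Finset.Icc (0 : ℤ) (m + 1), (g (k - 1) - g k) ^ 2 := by
  have hgm1 : g (-1) = 0 := by simp [hg, pb]
  have hgtop : g (m + 1) = 0 := by
    have h1 : ¬ ((m : ℤ) + 1 < 0) := by omega
    have h2 : ((m : ℤ) + 1).toNat = m + 1 := by omega
    rw [hg, pb, if_neg h1, h2]
    have : Finset.powersetCard (m + 1) (Finset.univ : Finset (Fin m)) = ∅ := by
      rw [Finset.powersetCard_eq_empty]
      simp
    simp [this]
  -- shift identity: ∑ g(k-1)^2 = ∑ g(k)^2 over Icc 0 (m+1)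
  have hins1 : Finset.Icc (-1 : ℤ) m = insert (-1 : ℤ) (Finset.Icc (0 : ℤ) m) := by
    ext x; simp [Finset.mem_Icc]; omega
  have hins2 : Finset.Icc (0 : ℤ) (m + 1) = insert ((m : ℤ) + 1) (Finset.Icc (0 : ℤ) m) := by
    ext x; simp [Finset.mem_Icc]; omega
  have hshift : ∑ k ∈ Finset.Icc (0 : ℤ) (m + 1), g (k - 1) ^ 2
      = ∑ k ∈ Finset.Icc (0 : ℤ) (m + 1), g k ^ 2 := by
    have hmap : ∑ k ∈ Finset.Icc (0 : ℤ) (m + 1), g (k - 1) ^ 2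
        = ∑ k ∈ Finset.Icc (-1 : ℤ) m, g k ^ 2 := by
      refine Finset.sum_nbij' (fun k => k - 1) (fun k => k + 1) ?_ ?_ ?_ ?_ ?_ <;>
        intros <;> simp_all [Finset.mem_Icc] <;> omega
    rw [hmap, hins1, hins2, Finset.sum_insert (by simp), Finset.sum_insert (by simp),
      hgm1, hgtop]
  have key : ∀ k : ℤ, (g (k - 1) - g k) * f k
      = (g (k - 1) * g k - g k ^ 2) + pn * (g (k - 1) - g k) ^ 2 := by
    intro k; rw [hf]; ring
  have hsum : ∑ k ∈ Finset.Icc (0 : ℤ) (m + 1), (g (k - 1) - g k) * f k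
      = (∑ k ∈ Finset.Icc (0 : ℤ) (m + 1), (g (k - 1) * g k - g k ^ 2))
        + pn * ∑ k ∈ Finset.Icc (0 : ℤ) (m + 1), (g (k - 1) - g k) ^ 2 := by
    rw [Finset.sum_congr rfl (fun k _ => key k), Finset.sum_add_distrib, Finset.mul_sum]
  have hD : ∑ k ∈ Finset.Icc (0 : ℤ) (m + 1), (g (k - 1) - g k) ^ 2
      = -2 * ∑ k ∈ Finset.Icc (0 : ℤ) (m + 1), (g (k - 1) * g k - g k ^ 2) := by
    have expand : ∀ k : ℤ, (g (k - 1) - g k) ^ 2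
        = g (k - 1) ^ 2 - g k ^ 2 + (-2) * (g (k - 1) * g k - g k ^ 2) := by
      intro k; ring
    rw [Finset.sum_congr rfl (fun k _ => expand k), Finset.sum_add_distrib,
      Finset.sum_sub_distrib, hshift, ← Finset.mul_sum]
    ring
  constructor
  · rw [hsum]
    set D := ∑ k ∈ Finset.Icc (0 : ℤ) (m + 1), (g (k - 1) - g k) ^ 2 with hDdef
    set A := ∑ k ∈ Finset.Icc (0 : ℤ) (m + 1), (g (k - 1) * g k - g k ^ 2) with hAdef
    have : D = -2 * A := hD
    linarith [this]
  · have h1 : 0 ≤ 1 - 2 * pn := by linarith [hpn.2]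
    have h2 : 0 ≤ ∑ k ∈ Finset.Icc (0 : ℤ) (m + 1), (g (k - 1) - g k) ^ 2 :=
      Finset.sum_nonneg fun k _ => sq_nonneg _
    positivity
end
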